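/- arXiv:1909.01853 — 5 statements merged into one kernel-verified Lean document; each statement's English description precedes it below -/
import Mathlib

section
/- Let Ω ⊆ ℝ³ be open, let μ : Ω → ℝ be measurable, and let H, H_h, H̃, j : Ω → ℝ³ be locally integrable vector fields such that both H and H̃ have weak curl j in Ω. Suppose e : ℝ³ → ℝ³ is continuously differentiable with compact support contained in Ω and μ(x)·(H(x) − H_h(x)) = (curl e)(x) for almost every x ∈ Ω. Then the function x ↦ μ(x)·(H̃(x) − H(x)) · (H(x) − H_h(x)) is integrable on Ω and ∫_Ω μ (H̃ − H) · (H − H_h) dx = 0. -/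
open MeasureTheory

/-- Partial derivative of a scalar function on ℝ³ in direction `i`. -/
noncomputable def pd3 (f : (Fin 3 → ℝ) → ℝ) (i : Fin 3) (x : Fin 3 → ℝ) : ℝ :=
  fderiv ℝ f x (Pi.single i 1)

/-- The curl of a vector field on ℝ³. -/
noncomputable def curl3 (F : (Fin 3 → ℝ) → (Fin 3 → ℝ)) (x : Fin 3 → ℝ) : Fin 3 → ℝ :=
  ![pd3 (fun y => F y 2) 1 x - pd3 (fun y => F y 1) 2 x,
    pd3 (fun y => F y 0) 2 x - pd3 (fun y => F y 2) 0 x,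
    pd3 (fun y => F y 1) 0 x - pd3 (fun y => F y 0) 1 x]

/-- Euclidean dot product on ℝ³. -/
def dot3 (a b : Fin 3 → ℝ) : ℝ := ∑ i, a i * b i

/-- `G` has weak curl `g` in the open set `Ω`: for every continuously differentiable
vector field `w` with compact support contained in `Ω`, the integrands `G ⬝ curl w` and
`g ⬝ w` are integrable on `Ω` and `∫_Ω G ⬝ curl w = ∫_Ω g ⬝ w`. -/
def HasWeakCurlOn (G g : (Fin 3 → ℝ) → (Fin 3 → ℝ)) (Ω : Set (Fin 3 → ℝ)) : Prop :=
  ∀ w : (Fin 3 → ℝ) → (Fin 3 → ℝ),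
    ContDiff ℝ 1 w → HasCompactSupport w → tsupport w ⊆ Ω →
      IntegrableOn (fun x => dot3 (G x) (curl3 w x)) Ω volume ∧
      IntegrableOn (fun x => dot3 (g x) (w x)) Ω volume ∧
      ∫ x in Ω, dot3 (G x) (curl3 w x) = ∫ x in Ω, dot3 (g x) (w x)

theorem orthogonality_of_equilibrated_error
    (Ω : Set (Fin 3 → ℝ)) (hΩ : IsOpen Ω)
    (μ : (Fin 3 → ℝ) → ℝ) (hμ : Measurable μ)
    (H Hh Ht j : (Fin 3 → ℝ) → (Fin 3 → ℝ))
    (hHloc : LocallyIntegrableOn H Ω volume)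
    (hHhloc : LocallyIntegrableOn Hh Ω volume)
    (hHtloc : LocallyIntegrableOn Ht Ω volume)
    (hjloc : LocallyIntegrableOn j Ω volume)
    (hH : HasWeakCurlOn H j Ω) (hHt : HasWeakCurlOn Ht j Ω)
    (e : (Fin 3 → ℝ) → (Fin 3 → ℝ))
    (he : ContDiff ℝ 1 e) (hesupp : HasCompactSupport e) (heΩ : tsupport e ⊆ Ω)
    (hrep : ∀ᵐ x ∂volume, x ∈ Ω → μ x • (H x - Hh x) = curl3 e x) :
    IntegrableOn (fun x => μ x * dot3 (Ht x - H x) (H x - Hh x)) Ω volume ∧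
    ∫ x in Ω, μ x * dot3 (Ht x - H x) (H x - Hh x) = 0 := by
  obtain ⟨ht1, ht2, ht3⟩ := hHt e he hesupp heΩ
  obtain ⟨h1, h2, h3⟩ := hH e he hesupp heΩ
  have hsub : (fun x => dot3 (Ht x - H x) (curl3 e x)) =
      fun x => dot3 (Ht x) (curl3 e x) - dot3 (H x) (curl3 e x) := by
    funext x
    simp [dot3, Pi.sub_apply, sub_mul, Finset.sum_sub_distrib]
  have hfint : IntegrableOn (fun x => dot3 (Ht x - H x) (curl3 e x)) Ω volume := by
    rw [hsub]; exact ht1.sub h1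
  have hfzero : ∫ x in Ω, dot3 (Ht x - H x) (curl3 e x) = 0 := by
    rw [hsub, integral_sub ht1 h1, ht3, h3, sub_self]
  have hae : (fun x => μ x * dot3 (Ht x - H x) (H x - Hh x)) =ᵐ[volume.restrict Ω]
      fun x => dot3 (Ht x - H x) (curl3 e x) := by
    rw [Filter.EventuallyEq, ae_restrict_iff' hΩ.measurableSet]
    filter_upwards [hrep] with x hx hxΩ
    rw [← hx hxΩ]
    simp only [dot3, Pi.smul_apply, smul_eq_mul, Pi.sub_apply, Finset.mul_sum]
    exact Finset.sum_congr rfl fun i _ => by ring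
  constructor
  · exact hfint.congr hae.symm
  · rw [integral_congr_ae hae, hfzero]
end

section
/- Let Ω ⊆ ℝ³ be open, let μ : Ω → ℝ be measurable with 0 < μ₀ ≤ μ(x) ≤ μ₁ for almost every x ∈ Ω, and let H, H_h, H̃, j : Ω → ℝ³ be locally integrable vector fields such that both H and H̃ have weak curl j in Ω. Suppose e : ℝ³ → ℝ³ is continuously differentiable with compact support contained in Ω, μ·(H − H_h) = curl e almost everywhere in Ω, and ∫_Ω μ|H̃ − H|² dx < ∞. Then all three integrals below are finite and the Prager–Synge identity holds: ∫_Ω μ|H̃ − H_h|² dx = ∫_Ω μ|H̃ − H|² dx + ∫_Ω μ|H − H_h|² dx. -/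
open MeasureTheory

lemma dot3_expand (m : ℝ) (u h k : Fin 3 → ℝ) :
    m * dot3 (u - k) (u - k)
      = m * dot3 (u - h) (u - h) + 2 * (m * dot3 (u - h) (h - k)) + m * dot3 (h - k) (h - k) := by
  simp only [dot3, Fin.sum_univ_three, Pi.sub_apply]
  ring

lemma dot3_smul (m : ℝ) (v d : Fin 3 → ℝ) : dot3 v (m • d) = m * dot3 v d := by
  simp only [dot3, Fin.sum_univ_three, Pi.smul_apply, smul_eq_mul]
  ring

lemma dot3_sub_left (a b c : Fin 3 → ℝ) : dot3 (a - b) c = dot3 a c - dot3 b c := by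
  simp only [dot3, Fin.sum_univ_three, Pi.sub_apply]
  ring

lemma dot3_self_nonneg (a : Fin 3 → ℝ) : 0 ≤ dot3 a a :=
  Finset.sum_nonneg fun i _ => mul_self_nonneg _

lemma aesm_dot3 {ν : MeasureTheory.Measure (Fin 3 → ℝ)} {A B : (Fin 3 → ℝ) → (Fin 3 → ℝ)}
    (hA : AEStronglyMeasurable A ν) (hB : AEStronglyMeasurable B ν) :
    AEStronglyMeasurable (fun x => dot3 (A x) (B x)) ν := by
  simp only [dot3, Fin.sum_univ_three]
  have h : ∀ i : Fin 3, AEStronglyMeasurable (fun x => A x i) ν :=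
    fun i => (continuous_apply i).comp_aestronglyMeasurable hA
  have h' : ∀ i : Fin 3, AEStronglyMeasurable (fun x => B x i) ν :=
    fun i => (continuous_apply i).comp_aestronglyMeasurable hB
  exact (((h 0).mul (h' 0)).add ((h 1).mul (h' 1))).add ((h 2).mul (h' 2))

theorem prager_synge_identity
    (Ω : Set (Fin 3 → ℝ)) (hΩ : IsOpen Ω)
    (μ : (Fin 3 → ℝ) → ℝ) (hμ : Measurable μ)
    (μ₀ μ₁ : ℝ) (hμ₀ : 0 < μ₀)
    (hbound : ∀ᵐ x ∂volume, x ∈ Ω → μ₀ ≤ μ x ∧ μ x ≤ μ₁)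
    (H Hh Ht j : (Fin 3 → ℝ) → (Fin 3 → ℝ))
    (hHloc : LocallyIntegrableOn H Ω volume)
    (hHhloc : LocallyIntegrableOn Hh Ω volume)
    (hHtloc : LocallyIntegrableOn Ht Ω volume)
    (hjloc : LocallyIntegrableOn j Ω volume)
    (hH : HasWeakCurlOn H j Ω) (hHt : HasWeakCurlOn Ht j Ω)
    (e : (Fin 3 → ℝ) → (Fin 3 → ℝ))
    (he : ContDiff ℝ 1 e) (hesupp : HasCompactSupport e) (heΩ : tsupport e ⊆ Ω)
    (hrep : ∀ᵐ x ∂volume, x ∈ Ω → μ x • (H x - Hh x) = curl3 e x)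
    (hfin : IntegrableOn (fun x => μ x * dot3 (Ht x - H x) (Ht x - H x)) Ω volume) :
    IntegrableOn (fun x => μ x * dot3 (Ht x - Hh x) (Ht x - Hh x)) Ω volume ∧
    IntegrableOn (fun x => μ x * dot3 (H x - Hh x) (H x - Hh x)) Ω volume ∧
    ∫ x in Ω, μ x * dot3 (Ht x - Hh x) (Ht x - Hh x)
      = (∫ x in Ω, μ x * dot3 (Ht x - H x) (Ht x - H x))
        + ∫ x in Ω, μ x * dot3 (H x - Hh x) (H x - Hh x) := by

  obtain ⟨hI1, hI2, hEq1⟩ := hH e he hesupp heΩ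
  obtain ⟨hI3, hI4, hEq3⟩ := hHt e he hesupp heΩ
  have hmemΩ := ae_restrict_mem (μ := volume) hΩ.measurableSet
  have hrep' : ∀ᵐ x ∂(volume.restrict Ω), μ x • (H x - Hh x) = curl3 e x :=
    (ae_restrict_iff' hΩ.measurableSet).2 hrep
  have hbound' : ∀ᵐ x ∂(volume.restrict Ω), μ₀ ≤ μ x ∧ μ x ≤ μ₁ :=
    (ae_restrict_iff' hΩ.measurableSet).2 hbound
  -- continuity of curl3 e
  have hcomp : ∀ i : Fin 3, ContDiff ℝ 1 (fun y => e y i) := fun i => (contDiff_pi.mp he) i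
  have hpd_cont : ∀ (k i : Fin 3), Continuous (pd3 (fun y => e y k) i) := by
    intro k i
    exact ((hcomp k).continuous_fderiv one_ne_zero).clm_apply continuous_const
  have hcurl_cont : Continuous (curl3 e) := by
    apply continuous_pi
    intro i
    fin_cases i <;>
      simp only [curl3, Matrix.cons_val_zero, Matrix.cons_val_one, Matrix.head_cons,
        Matrix.cons_val_two, Matrix.tail_cons] <;>
      exact (hpd_cont _ _).sub (hpd_cont _ _)
  -- vanishing of curl3 e outside tsupport e
  have hpd_zero : ∀ (k i : Fin 3) (x : Fin 3 → ℝ), x ∉ tsupport e →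
      pd3 (fun y => e y k) i x = 0 := by
    intro k i x hx
    have h0 : (fun y => e y k) =ᶠ[nhds x] (fun _ => (0 : ℝ)) := by
      filter_upwards [notMem_tsupport_iff_eventuallyEq.mp hx] with y hy
      simp [hy]
    unfold pd3
    rw [h0.fderiv_eq]
    simp
  have hcurl_cs : HasCompactSupport (curl3 e) := by
    apply HasCompactSupport.intro hesupp
    intro x hx
    funext i
    fin_cases i <;>
      simp [curl3, hpd_zero _ _ _ hx]
  -- the dominating function
  set g : (Fin 3 → ℝ) → ℝ := fun x => μ₀⁻¹ * dot3 (curl3 e x) (curl3 e x) with hg_def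
  have hg_cont : Continuous g := by
    apply continuous_const.mul
    unfold dot3
    exact continuous_finset_sum _ fun i _ =>
      ((continuous_apply i).comp hcurl_cont).mul ((continuous_apply i).comp hcurl_cont)
  have hg_cs : HasCompactSupport g := by
    apply HasCompactSupport.intro hcurl_cs
    intro x hx
    have : curl3 e x = 0 := image_eq_zero_of_notMem_tsupport hx
    simp [hg_def, this, dot3]
  have hg_int : Integrable g volume := hg_cont.integrable_of_hasCompactSupport hg_cs
  -- a.e. strong measurability pieces
  have hHsm := hHloc.aestronglyMeasurable
  have hHhsm := hHhloc.aestronglyMeasurable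
  have hμsm : AEStronglyMeasurable μ (volume.restrict Ω) := hμ.aestronglyMeasurable
  -- integrability of μ |H - Hh|²
  have hD : IntegrableOn (fun x => μ x * dot3 (H x - Hh x) (H x - Hh x)) Ω volume := by
    apply Integrable.mono' hg_int.integrableOn
    · exact hμsm.mul (aesm_dot3 (hHsm.sub hHhsm) (hHsm.sub hHhsm))
    · filter_upwards [hrep', hbound'] with x hx hb
      set d := H x - Hh x
      set c := curl3 e x
      set m := μ x
      have hm : 0 < m := lt_of_lt_of_le hμ₀ hb.1
      have hdd : 0 ≤ dot3 d d := dot3_self_nonneg d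
      have hcc : dot3 c c = m ^ 2 * dot3 d d := by
        rw [← hx]
        simp only [dot3, Fin.sum_univ_three, Pi.smul_apply, smul_eq_mul]
        ring
      rw [Real.norm_eq_abs, abs_of_nonneg (mul_nonneg hm.le hdd), hg_def]
      show m * dot3 d d ≤ μ₀⁻¹ * dot3 c c
      rw [hcc]
      have h1 : μ₀ * (m * dot3 d d) ≤ m ^ 2 * dot3 d d := by
        rw [pow_two]
        nlinarith [mul_nonneg (mul_nonneg (sub_nonneg.mpr hb.1) hm.le) hdd]
      calc m * dot3 d d = μ₀⁻¹ * (μ₀ * (m * dot3 d d)) := by field_simp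
        _ ≤ μ₀⁻¹ * (m ^ 2 * dot3 d d) :=
            mul_le_mul_of_nonneg_left h1 (inv_pos.mpr hμ₀).le
  -- the cross term
  have hcross_eq : (fun x => μ x * dot3 (Ht x - H x) (H x - Hh x))
      =ᵐ[volume.restrict Ω] (fun x => dot3 (Ht x) (curl3 e x) - dot3 (H x) (curl3 e x)) := by
    filter_upwards [hrep'] with x hx
    calc μ x * dot3 (Ht x - H x) (H x - Hh x)
        = dot3 (Ht x - H x) (μ x • (H x - Hh x)) := (dot3_smul _ _ _).symm
      _ = dot3 (Ht x - H x) (curl3 e x) := by rw [hx]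
      _ = dot3 (Ht x) (curl3 e x) - dot3 (H x) (curl3 e x) := dot3_sub_left _ _ _
  have hBint : IntegrableOn (fun x => μ x * dot3 (Ht x - H x) (H x - Hh x)) Ω volume :=
    (hI3.sub hI1).congr hcross_eq.symm
  have hBzero : ∫ x in Ω, μ x * dot3 (Ht x - H x) (H x - Hh x) = 0 := by
    rw [integral_congr_ae hcross_eq, integral_sub hI3 hI1, hEq3, hEq1, sub_self]
  -- the pointwise expansion
  have hexp : (fun x => μ x * dot3 (Ht x - Hh x) (Ht x - Hh x))
      = fun x => μ x * dot3 (Ht x - H x) (Ht x - H x)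
          + 2 * (μ x * dot3 (Ht x - H x) (H x - Hh x))
          + μ x * dot3 (H x - Hh x) (H x - Hh x) :=
    funext fun x => dot3_expand (μ x) (Ht x) (H x) (Hh x)
  have h2B : IntegrableOn (fun x => 2 * (μ x * dot3 (Ht x - H x) (H x - Hh x))) Ω volume :=
    hBint.const_mul 2
  have hAB : IntegrableOn (fun x => μ x * dot3 (Ht x - H x) (Ht x - H x)
      + 2 * (μ x * dot3 (Ht x - H x) (H x - Hh x))) Ω volume := hfin.add h2B
  have hFint : IntegrableOn (fun x => μ x * dot3 (Ht x - Hh x) (Ht x - Hh x)) Ω volume := by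
    rw [hexp]
    exact hAB.add hD
  refine ⟨hFint, hD, ?_⟩
  rw [hexp, integral_add hAB hD, integral_add hfin h2B, integral_const_mul, hBzero,
    mul_zero, add_zero]
end

section
/- Polynomial exactness of the curl at the Raviart–Thomas stage: let k ≥ 1 and let u : ℝ³ → ℝ³ be of Raviart–Thomas form D_k. If div u = 0 everywhere on ℝ³, then there exist vector fields a, b : ℝ³ → ℝ³ with components in P_{k−1} such that the Nédélec-form field A(x) := a(x) + x × b(x) satisfies curl A = u everywhere on ℝ³. -/
open MeasureTheory

/-- The divergence of a vector field on ℝ³. -/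
noncomputable def div3 (F : (Fin 3 → ℝ) → (Fin 3 → ℝ)) (x : Fin 3 → ℝ) : ℝ :=
  ∑ i, pd3 (fun y => F y i) i x

/-- The gradient of a scalar function on ℝ³. -/
noncomputable def grad3 (f : (Fin 3 → ℝ) → ℝ) (x : Fin 3 → ℝ) : Fin 3 → ℝ :=
  fun i => fderiv ℝ f x (Pi.single i 1)

/-- Cross product on ℝ³. -/
def cross3 (a b : Fin 3 → ℝ) : Fin 3 → ℝ :=
  ![a 1 * b 2 - a 2 * b 1, a 2 * b 0 - a 0 * b 2, a 0 * b 1 - a 1 * b 0]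

/-- `f` is (the evaluation of) a real polynomial in three variables of total degree ≤ k. -/
def IsPolyFun3 (k : ℕ) (f : (Fin 3 → ℝ) → ℝ) : Prop :=
  ∃ p : MvPolynomial (Fin 3) ℝ, p.totalDegree ≤ k ∧ ∀ x, f x = MvPolynomial.eval x p

/-- `A` is of Nédélec form `R_k`: `A x = a x + x × b x` with the components of `a, b`
polynomials of total degree at most `k - 1`. -/
def IsNedelec (k : ℕ) (A : (Fin 3 → ℝ) → (Fin 3 → ℝ)) : Prop :=
  ∃ a b : (Fin 3 → ℝ) → (Fin 3 → ℝ),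
    (∀ i, IsPolyFun3 (k - 1) (fun x => a x i)) ∧
    (∀ i, IsPolyFun3 (k - 1) (fun x => b x i)) ∧
    ∀ x, A x = a x + cross3 x (b x)

/-- `u` is of Raviart–Thomas form `D_k`: `u x = v x + (w x) • x` with the components of `v`
and the scalar `w` polynomials of total degree at most `k - 1`. -/
def IsRT (k : ℕ) (u : (Fin 3 → ℝ) → (Fin 3 → ℝ)) : Prop :=
  ∃ (v : (Fin 3 → ℝ) → (Fin 3 → ℝ)) (w : (Fin 3 → ℝ) → ℝ),
    (∀ i, IsPolyFun3 (k - 1) (fun x => v x i)) ∧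
    IsPolyFun3 (k - 1) w ∧
    ∀ x, u x = v x + w x • x

/-- The standard reference tetrahedron in ℝ³. -/
def refTet : Set (Fin 3 → ℝ) := {x | (∀ i, 0 ≤ x i) ∧ ∑ i, x i ≤ 1}

section Aux
open MvPolynomial Finsupp

open MvPolynomial

noncomputable def evalDeriv (p : MvPolynomial (Fin 3) ℝ) (x : Fin 3 → ℝ) : (Fin 3 → ℝ) →L[ℝ] ℝ :=
  ∑ j, MvPolynomial.eval x (MvPolynomial.pderiv j p) • (ContinuousLinearMap.proj j)

lemma hasFDerivAt_eval (p : MvPolynomial (Fin 3) ℝ) (x : Fin 3 → ℝ) :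
    HasFDerivAt (fun y => MvPolynomial.eval y p) (evalDeriv p x) x := by
  induction p using MvPolynomial.induction_on with
  | C a =>
      have : evalDeriv (C a) x = 0 := by simp [evalDeriv]
      rw [this]
      simpa using hasFDerivAt_const a x
  | add p q hp hq =>
      have : evalDeriv (p + q) x = evalDeriv p x + evalDeriv q x := by
        simp [evalDeriv, add_smul, Finset.sum_add_distrib]
      rw [this]
      have hf : (fun y : Fin 3 → ℝ => MvPolynomial.eval y (p + q))
          = (fun y => MvPolynomial.eval y p) + (fun y => MvPolynomial.eval y q) := by
        funext y
        simp
      rw [hf]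
      exact hp.add hq
  | mul_X p j hp =>
      have h2 : HasFDerivAt (fun y : Fin 3 → ℝ => y j)
          (ContinuousLinearMap.proj j : (Fin 3 → ℝ) →L[ℝ] ℝ) x :=
        (ContinuousLinearMap.proj j : (Fin 3 → ℝ) →L[ℝ] ℝ).hasFDerivAt
      have := hp.mul h2
      have he : evalDeriv (p * X j) x
          = MvPolynomial.eval x p • (ContinuousLinearMap.proj j : (Fin 3 → ℝ) →L[ℝ] ℝ)
            + x j • evalDeriv p x := by
        classical
        ext v
        fin_cases j <;>
          simp [evalDeriv, pderiv_mul, pderiv_X, Fin.sum_univ_three, Pi.single_apply,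
            Matrix.cons_val_zero, Matrix.cons_val_one] <;> ring
      rw [he]
      have hf : (fun y : Fin 3 → ℝ => MvPolynomial.eval y (p * X j))
          = (fun y => MvPolynomial.eval y p) * (fun y : Fin 3 → ℝ => y j) := by
        funext y
        simp
      rw [hf]
      exact this

lemma pd3_eval' (p : MvPolynomial (Fin 3) ℝ) (i : Fin 3) (x : Fin 3 → ℝ) :
    fderiv ℝ (fun y => MvPolynomial.eval y p) x (Pi.single i 1)
      = MvPolynomial.eval x (MvPolynomial.pderiv i p) := by
  rw [(hasFDerivAt_eval p x).fderiv]
  classical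
  simp only [evalDeriv, ContinuousLinearMap.sum_apply, ContinuousLinearMap.smul_apply,
    ContinuousLinearMap.proj_apply, Pi.single_apply, smul_eq_mul, mul_ite, mul_one, mul_zero]
  simp

open MvPolynomial Finsupp

lemma deg3 (s : Fin 3 →₀ ℕ) : s.degree = ∑ j : Fin 3, s j := by
  rw [Finsupp.degree]
  exact Finset.sum_subset (Finset.subset_univ _)
    (fun i _ hi => Finsupp.notMem_support_iff.mp hi)

lemma single_le_of_pos {s : Fin 3 →₀ ℕ} {i : Fin 3} (h : 0 < s i) :
    Finsupp.single i 1 ≤ s := by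
  intro j
  rcases eq_or_ne i j with rfl | hj
  · simpa using Nat.succ_le_of_lt h
  · simp [Finsupp.single_apply, hj]

lemma X_mul_pderiv_monomial (i : Fin 3) (s : Fin 3 →₀ ℕ) (a : ℝ) :
    X i * pderiv i (monomial s a) = monomial s (a * s i) := by
  rw [pderiv_monomial]
  rcases Nat.eq_zero_or_pos (s i) with h | h
  · simp [h]
  · have hs : s - Finsupp.single i 1 + Finsupp.single i 1 = s :=
      tsub_add_cancel_of_le (single_le_of_pos h)
    calc X i * monomial (s - Finsupp.single i 1) (a * ↑(s i))
        = monomial (s - Finsupp.single i 1) (a * ↑(s i)) * X i ^ 1 := by ring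
      _ = monomial (s - Finsupp.single i 1 + Finsupp.single i 1) (a * ↑(s i)) := by
          rw [monomial_add_single]
      _ = monomial s (a * ↑(s i)) := by rw [hs]

lemma euler3 {m : ℕ} {p : MvPolynomial (Fin 3) ℝ} (hp : p.IsHomogeneous m) :
    ∑ i : Fin 3, X i * pderiv i p = MvPolynomial.C (m : ℝ) * p := by
  conv_lhs => rw [p.as_sum]
  conv_rhs => rw [p.as_sum]
  simp only [map_sum, Finset.mul_sum, X_mul_pderiv_monomial]
  rw [Finset.sum_comm]
  refine Finset.sum_congr rfl fun v hv => ?_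
  have hdeg : v.degree = m := by
    rw [Finsupp.degree_eq_weight_one]
    exact hp (MvPolynomial.mem_support_iff.mp hv)
  rw [← map_sum, C_mul_monomial]
  congr 1
  have : ∑ i : Fin 3, ((v i : ℝ)) = (m : ℝ) := by
    rw [← Nat.cast_sum, ← deg3, hdeg]
  rw [← Finset.mul_sum, this]
  ring

lemma hc_monomial (n : ℕ) (s : Fin 3 →₀ ℕ) (a : ℝ) :
    homogeneousComponent n (monomial s a)
      = if s.degree = n then monomial s a else 0 := by
  ext d
  simp only [coeff_homogeneousComponent, coeff_monomial, coeff_zero, apply_ite (coeff d)]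
  by_cases hsd : s = d
  · subst hsd; simp [coeff_monomial]
  · simp [coeff_monomial, hsd]

lemma deg_single3 (i : Fin 3) : ∑ j : Fin 3, (Finsupp.single i 1 : Fin 3 →₀ ℕ) j = 1 := by
  simp [Finsupp.single_apply]

lemma degree_sub_single {s : Fin 3 →₀ ℕ} {i : Fin 3} (h : 0 < s i) :
    (s - Finsupp.single i 1).degree = s.degree - 1 := by
  rw [deg3, deg3]
  have h1 : ∀ j : Fin 3, Finsupp.single i 1 j ≤ s j := single_le_of_pos h
  calc ∑ j : Fin 3, ((s - Finsupp.single i 1 : Fin 3 →₀ ℕ)) j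
      = ∑ j : Fin 3, (s j - Finsupp.single i 1 j) := by
        refine Finset.sum_congr rfl fun j _ => ?_
        exact Finsupp.tsub_apply s (Finsupp.single i 1) j
    _ = ∑ j : Fin 3, s j - ∑ j : Fin 3, (Finsupp.single i 1) j := by
        rw [Finset.sum_tsub_distrib]
        intro j _; exact h1 j
    _ = ∑ j : Fin 3, s j - 1 := by
        congr 1
        rw [deg_single3 i]
lemma degree_add_single (s : Fin 3 →₀ ℕ) (i : Fin 3) :
    (s + Finsupp.single i 1).degree = s.degree + 1 := by
  rw [deg3, deg3]
  calc ∑ j : Fin 3, ((s + Finsupp.single i 1 : Fin 3 →₀ ℕ)) j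
      = ∑ j : Fin 3, (s j + Finsupp.single i 1 j) := rfl
    _ = ∑ j : Fin 3, s j + ∑ j : Fin 3, (Finsupp.single i 1) j := Finset.sum_add_distrib
    _ = ∑ j : Fin 3, s j + 1 := by
        congr 1
        rw [deg_single3 i]

lemma pderiv_hc (m : ℕ) (i : Fin 3) (p : MvPolynomial (Fin 3) ℝ) :
    pderiv i (homogeneousComponent (m + 1) p) = homogeneousComponent m (pderiv i p) := by
  induction p using MvPolynomial.induction_on' with
  | add p q hp hq => simp [map_add, hp, hq]
  | monomial s a =>
      rw [hc_monomial, pderiv_monomial, hc_monomial]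
      rcases Nat.eq_zero_or_pos (s i) with h | h
      · simp only [h, Nat.cast_zero, mul_zero, monomial_zero]
        split_ifs <;> simp [h]
      · have hpos : 1 ≤ s.degree := by
          rw [deg3]
          exact le_trans h (Finset.single_le_sum (fun _ _ => Nat.zero_le _)
            (Finset.mem_univ i))
        have hdeg := degree_sub_single h
        by_cases hcase : s.degree = m + 1
        · rw [if_pos hcase, if_pos (by omega), pderiv_monomial]
        · rw [if_neg hcase, if_neg (by omega), map_zero]

lemma hc_mul_X (m : ℕ) (i : Fin 3) (q : MvPolynomial (Fin 3) ℝ) :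
    homogeneousComponent (m + 1) (q * X i) = homogeneousComponent m q * X i := by
  induction q using MvPolynomial.induction_on' with
  | add p q hp hq => simp [add_mul, map_add, hp, hq]
  | monomial s a =>
      have hmul : monomial s a * X i = monomial (s + Finsupp.single i 1) a := by
        rw [monomial_add_single, pow_one]
      rw [hmul, hc_monomial, hc_monomial, degree_add_single]
      by_cases hcase : s.degree = m
      · rw [if_pos (by omega), if_pos hcase, hmul]
      · rw [if_neg (by omega), if_neg hcase, zero_mul]

lemma sum_hc (n : ℕ) (p : MvPolynomial (Fin 3) ℝ) (h : p.totalDegree ≤ n) :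
    ∑ m ∈ Finset.range (n + 1), homogeneousComponent m p = p := by
  conv_rhs => rw [← MvPolynomial.sum_homogeneousComponent p]
  refine (Finset.sum_subset ?_ ?_).symm
  · intro m hm
    simp only [Finset.mem_range] at *
    omega
  · intro m _ hm
    simp only [Finset.mem_range, not_lt] at hm
    exact homogeneousComponent_eq_zero m p (by omega)

open MvPolynomial

noncomputable def XC (B : Fin 3 → MvPolynomial (Fin 3) ℝ) : Fin 3 → MvPolynomial (Fin 3) ℝ :=
  ![X 1 * B 2 - X 2 * B 1, X 2 * B 0 - X 0 * B 2, X 0 * B 1 - X 1 * B 0]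

noncomputable def pcurl (F : Fin 3 → MvPolynomial (Fin 3) ℝ) : Fin 3 → MvPolynomial (Fin 3) ℝ :=
  ![pderiv 1 (F 2) - pderiv 2 (F 1), pderiv 2 (F 0) - pderiv 0 (F 2),
    pderiv 0 (F 1) - pderiv 1 (F 0)]

lemma curl_cross (Cv : Fin 3 → MvPolynomial (Fin 3) ℝ) (j : Fin 3) :
    pcurl (XC Cv) j = X j * (∑ i, pderiv i (Cv i)) - 2 * Cv j - ∑ i, X i * pderiv i (Cv j) := by
  fin_cases j <;>
    · simp [pcurl, XC, Fin.sum_univ_three, pderiv_mul, pderiv_X, Pi.single_apply]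
      ring

lemma XC_sum (n : ℕ) (G : ℕ → Fin 3 → MvPolynomial (Fin 3) ℝ) :
    XC (fun i => ∑ m ∈ Finset.range n, G m i) = fun j => ∑ m ∈ Finset.range n, XC (G m) j := by
  funext j
  fin_cases j <;>
    simp [XC, Finset.mul_sum, Finset.sum_sub_distrib]

lemma pcurl_sum (n : ℕ) (F : ℕ → Fin 3 → MvPolynomial (Fin 3) ℝ) (j : Fin 3) :
    pcurl (fun i => ∑ m ∈ Finset.range n, F m i) j = ∑ m ∈ Finset.range n, pcurl (F m) j := by
  fin_cases j <;>
    simp [pcurl, map_sum, Finset.sum_sub_distrib]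

lemma XC_Cmul (c : ℝ) (Cv : Fin 3 → MvPolynomial (Fin 3) ℝ) :
    XC (fun i => C c * Cv i) = fun j => C c * XC Cv j := by
  funext j
  fin_cases j <;> (simp [XC]; ring)

lemma pcurl_Cmul (c : ℝ) (F : Fin 3 → MvPolynomial (Fin 3) ℝ) (j : Fin 3) :
    pcurl (fun i => C c * F i) j = C c * pcurl F j := by
  fin_cases j <;> simp [pcurl, pderiv_C_mul, mul_sub]

lemma pd3_eval (p : MvPolynomial (Fin 3) ℝ) (i : Fin 3) (x : Fin 3 → ℝ) :
    pd3 (fun y => MvPolynomial.eval y p) i x = MvPolynomial.eval x (MvPolynomial.pderiv i p) :=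
  pd3_eval' p i x

end Aux

section Main
open MvPolynomial

theorem rt_divfree_is_curl_of_nedelec (k : ℕ) (hk : 1 ≤ k)
    (u : (Fin 3 → ℝ) → (Fin 3 → ℝ)) (hu : IsRT k u)
    (hdiv : ∀ x, div3 u x = 0) :
    ∃ a b : (Fin 3 → ℝ) → (Fin 3 → ℝ),
      (∀ i, IsPolyFun3 (k - 1) (fun x => a x i)) ∧
      (∀ i, IsPolyFun3 (k - 1) (fun x => b x i)) ∧
      ∀ x, curl3 (fun y => a y + cross3 y (b y)) x = u x := by
  classical
  obtain ⟨v, w, hv, hw, huvw⟩ := hu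
  choose pv hpvdeg hpv using hv
  obtain ⟨q, hqdeg, hq⟩ := hw
  set P : Fin 3 → MvPolynomial (Fin 3) ℝ := fun i => pv i + q * X i with hPdef
  have hP : ∀ x i, u x i = eval x (P i) := by
    intro x i
    have := huvw x
    have hcomp : u x i = v x i + w x * x i := by
      rw [this]; simp [Pi.smul_apply, smul_eq_mul, mul_comm]
    have h1 : v x i = eval x (pv i) := hpv i x
    rw [hcomp, h1, hq x]
    simp [hPdef]
  have hPdeg : ∀ i, (P i).totalDegree ≤ k := by
    intro i
    refine le_trans (totalDegree_add _ _) (max_le (le_trans (hpvdeg i) (by omega)) ?_)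
    refine le_trans (totalDegree_mul _ _) ?_
    rw [totalDegree_X]
    omega
  -- the divergence polynomial vanishes
  have hD : ∑ i : Fin 3, pderiv i (P i) = 0 := by
    have heval : ∀ x : Fin 3 → ℝ, eval x (∑ i : Fin 3, pderiv i (P i)) = 0 := by
      intro x
      have h1 : eval x (∑ i : Fin 3, pderiv i (P i))
          = ∑ i : Fin 3, pd3 (fun y => u y i) i x := by
        rw [map_sum]
        refine Finset.sum_congr rfl fun i _ => ?_
        rw [← pd3_eval]
        congr 1
        funext y
        exact (hP y i).symm
      rw [h1]
      exact hdiv x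
    have := MvPolynomial.funext (p := ∑ i : Fin 3, pderiv i (P i)) (q := 0)
      (fun x => by rw [heval x]; simp)
    exact this
  set U : ℕ → Fin 3 → MvPolynomial (Fin 3) ℝ :=
    fun m i => homogeneousComponent m (P i) with hUdef
  have hUhom : ∀ m i, (U m i).IsHomogeneous m :=
    fun m i => homogeneousComponent_isHomogeneous m (P i)
  have hUdiv : ∀ m, ∑ i : Fin 3, pderiv i (U m i) = 0 := by
    intro m
    cases m with
    | zero =>
        refine Finset.sum_eq_zero fun i _ => ?_
        rw [hUdef]
        simp [homogeneousComponent_zero]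
    | succ m =>
        have : ∀ i : Fin 3, pderiv i (U (m + 1) i) = homogeneousComponent m (pderiv i (P i)) :=
          fun i => pderiv_hc m i (P i)
        rw [Finset.sum_congr rfl (fun i _ => this i), ← map_sum, hD, map_zero]
  -- the top component vanishes
  have hUk : ∀ i, U k i = 0 := by
    obtain ⟨K, rfl⟩ : ∃ K, k = K + 1 := ⟨k - 1, by omega⟩
    set r := homogeneousComponent K q with hrdef
    have hrhom : r.IsHomogeneous K := homogeneousComponent_isHomogeneous K q
    have hUki : ∀ i, U (K + 1) i = r * X i := by
      intro i
      rw [hUdef]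
      simp only [hPdef, map_add]
      rw [homogeneousComponent_eq_zero (K + 1) (pv i) (lt_of_le_of_lt (hpvdeg i) (by omega)),
        hc_mul_X K i q, zero_add]
    have hzero : MvPolynomial.C ((K : ℝ) + 3) * r = 0 := by
      have h1 : ∑ i : Fin 3, pderiv i (U (K + 1) i) = 0 := hUdiv (K + 1)
      rw [Finset.sum_congr rfl (fun i _ => by rw [hUki i])] at h1
      have h2 : ∀ i : Fin 3, pderiv i (r * X i) = X i * pderiv i r + r := by
        intro i
        rw [pderiv_mul, pderiv_X_self, mul_one]
        ring
      rw [Finset.sum_congr rfl (fun i _ => h2 i), Finset.sum_add_distrib,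
        euler3 hrhom, Finset.sum_const] at h1
      have h3 : MvPolynomial.C ((K : ℝ) + 3) * r
          = MvPolynomial.C (K : ℝ) * r + (Finset.univ : Finset (Fin 3)).card • r := by
        simp only [Finset.card_univ, Fintype.card_fin]
        rw [map_add, map_ofNat]
        ring
      rw [h3, h1]
    have hC : (MvPolynomial.C ((K : ℝ) + 3) : MvPolynomial (Fin 3) ℝ) ≠ 0 := by
      rw [Ne, MvPolynomial.C_eq_zero]
      positivity
    have hr0 : r = 0 := by
      rcases mul_eq_zero.mp hzero with h | h
      · exact absurd h hC
      · exact h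
    intro i
    rw [hUki i, hr0, zero_mul]
  -- sum of components
  have hPsum : ∀ i, P i = ∑ m ∈ Finset.range k, U m i := by
    intro i
    have h1 := sum_hc k (P i) (hPdeg i)
    rw [Finset.sum_range_succ] at h1
    rw [hUdef]
    have : homogeneousComponent k (P i) = 0 := hUk i
    rw [this, add_zero] at h1
    exact h1.symm
  -- the vector potential
  set c' : ℕ → ℝ := fun m => -(1 / ((m : ℝ) + 2)) with hc'def
  set B : Fin 3 → MvPolynomial (Fin 3) ℝ :=
    fun i => ∑ m ∈ Finset.range k, MvPolynomial.C (c' m) * U m i with hBdef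
  have hBdeg : ∀ i, (B i).totalDegree ≤ k - 1 := by
    intro i
    rw [hBdef]
    refine le_trans (totalDegree_finset_sum _ _) (Finset.sup_le fun m hm => ?_)
    rw [Finset.mem_range] at hm
    rw [C_mul']
    refine le_trans (totalDegree_smul_le _ _) (le_trans ((hUhom m i).totalDegree_le) (by omega))
  have hcurl : ∀ j, pcurl (XC B) j = P j := by
    intro j
    have h1 : pcurl (XC B) j
        = ∑ m ∈ Finset.range k, pcurl (XC (fun i => MvPolynomial.C (c' m) * U m i)) j := by
      rw [hBdef]
      rw [XC_sum k (fun m i => MvPolynomial.C (c' m) * U m i)]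
      exact pcurl_sum k _ j
    rw [h1]
    have h2 : ∀ m, m ∈ Finset.range k →
        pcurl (XC (fun i => MvPolynomial.C (c' m) * U m i)) j = U m j := by
      intro m _
      rw [XC_Cmul (c' m) (U m), pcurl_Cmul (c' m) _ j]
      rw [curl_cross (U m) j, hUdiv m, euler3 (hUhom m j)]
      rw [mul_zero, zero_sub]
      have : MvPolynomial.C (c' m) * (-(2 * U m j) - MvPolynomial.C (m : ℝ) * U m j)
          = MvPolynomial.C (c' m) * (-(MvPolynomial.C ((m : ℝ) + 2))) * U m j := by
        rw [map_add, map_ofNat]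
        ring
      rw [this, ← map_neg, ← map_mul]
      have hcm : c' m * -((m : ℝ) + 2) = 1 := by
        rw [hc'def]
        field_simp
      rw [hcm, MvPolynomial.C_1, one_mul]
    rw [Finset.sum_congr rfl h2]
    exact (hPsum j).symm
  -- assemble
  refine ⟨fun _ => 0, fun x i => eval x (B i), ?_, ?_, ?_⟩
  · intro i
    exact ⟨0, by simp, fun x => by simp⟩
  · intro i
    exact ⟨B i, hBdeg i, fun x => rfl⟩
  · intro x
    have hA : ∀ i : Fin 3,
        (fun y => ((fun _ => (0 : Fin 3 → ℝ)) y + cross3 y (fun i => eval y (B i))) i)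
          = fun y => eval y (XC B i) := by
      intro i
      funext y
      fin_cases i <;> simp [cross3, XC]
    funext j
    fin_cases j
    · show pd3 _ 1 x - pd3 _ 2 x = u x 0
      rw [hA 2, hA 1, pd3_eval, pd3_eval, ← map_sub]
      have h5 : pderiv 1 (XC B 2) - pderiv 2 (XC B 1) = pcurl (XC B) 0 := by simp [pcurl]
      rw [h5, hcurl 0]
      exact (hP x 0).symm
    · show pd3 _ 2 x - pd3 _ 0 x = u x 1
      rw [hA 0, hA 2, pd3_eval, pd3_eval, ← map_sub]
      have h5 : pderiv 2 (XC B 0) - pderiv 0 (XC B 2) = pcurl (XC B) 1 := by simp [pcurl]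
      rw [h5, hcurl 1]
      exact (hP x 1).symm
    · show pd3 _ 0 x - pd3 _ 1 x = u x 2
      rw [hA 1, hA 0, pd3_eval, pd3_eval, ← map_sub]
      have h5 : pderiv 0 (XC B 1) - pderiv 1 (XC B 0) = pcurl (XC B) 2 := by simp [pcurl]
      rw [h5, hcurl 2]
      exact (hP x 2).symm

end Main
end

section
/- Polynomial exactness of the gradient at the Nédélec stage: let k ≥ 1 and let A : ℝ³ → ℝ³ be of Nédélec form R_k. If curl A = 0 everywhere on ℝ³, then there exists a real polynomial ψ of total degree at most k in three variables such that A = ∇ψ everywhere on ℝ³. -/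
open MeasureTheory

namespace NedAux

open MvPolynomial


lemma deg3 (d : Fin 3 →₀ ℕ) : d.degree = ∑ i : Fin 3, d i := by
  rw [Finsupp.degree]
  exact Finset.sum_subset (Finset.subset_univ _)
    (fun i _ hi => Finsupp.notMem_support_iff.mp hi)

lemma degree_single (j : Fin 3) : (Finsupp.single j 1).degree = 1 := by
  rw [deg3]
  simp [Finsupp.single_apply]

lemma degree_sub_single (m : Fin 3 →₀ ℕ) (j : Fin 3) (h : m j ≠ 0) :
    (m - Finsupp.single j 1).degree + 1 = m.degree := by
  have hle : Finsupp.single j 1 ≤ m := Finsupp.single_le_iff.mpr (by omega)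
  have hm : m - Finsupp.single j 1 + Finsupp.single j 1 = m := tsub_add_cancel_of_le hle
  calc (m - Finsupp.single j 1).degree + 1
      = (m - Finsupp.single j 1).degree + (Finsupp.single j 1).degree := by
        rw [degree_single]
    _ = m.degree := by
        rw [deg3, deg3, deg3 m, ← Finset.sum_add_distrib]
        congr 1
        ext i
        conv_rhs => rw [← hm]
        simp

lemma hc_monomial (n : ℕ) (m : Fin 3 →₀ ℕ) (a : ℝ) :
    homogeneousComponent n (monomial m a) =
      if n = m.degree then monomial m a else 0 :=
  homogeneousComponent_of_mem ((mem_homogeneousSubmodule _ _).mpr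
    (isHomogeneous_monomial a rfl))

lemma pderiv_hc (j : Fin 3) (d : ℕ) (p : MvPolynomial (Fin 3) ℝ) :
    pderiv j (homogeneousComponent (d + 1) p) =
      homogeneousComponent d (pderiv j p) := by
  induction p using MvPolynomial.induction_on' with
  | add p q hp hq => rw [map_add, map_add, map_add, hp, hq, map_add]
  | monomial m a =>
      rw [hc_monomial, pderiv_monomial]
      by_cases hmj : m j = 0
      · rw [hmj]
        simp only [Nat.cast_zero, mul_zero, monomial_zero, map_zero]
        split <;> simp [hmj]
      · rw [hc_monomial]
        have hdeg := degree_sub_single m j hmj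
        by_cases hd : d + 1 = m.degree
        · rw [if_pos hd, if_pos (by omega), pderiv_monomial]
        · rw [if_neg hd, if_neg (by omega), map_zero]

lemma euler_hc (d : ℕ) (p : MvPolynomial (Fin 3) ℝ) :
    homogeneousComponent d (∑ i : Fin 3, X i * pderiv i p) =
      d • homogeneousComponent d p := by
  induction p using MvPolynomial.induction_on' with
  | add p q hp hq =>
      simp only [map_add, mul_add, Finset.sum_add_distrib, smul_add] at *
      rw [hp, hq]
  | monomial m a =>
      have key : ∀ i : Fin 3, X i * pderiv i (monomial m a) = monomial m (a * m i) := by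
        intro i
        rw [pderiv_monomial, X, monomial_mul]
        by_cases hmi : m i = 0
        · rw [hmi]; simp
        · rw [one_mul]
          congr 1
          rw [add_comm, tsub_add_cancel_of_le (Finsupp.single_le_iff.mpr (by omega))]
      rw [Finset.sum_congr rfl (fun i _ => key i)]
      have : ∑ i : Fin 3, monomial m (a * (m i : ℝ)) = monomial m ((m.degree : ℝ) * a) := by
        rw [← map_sum, ← Finset.mul_sum, deg3, mul_comm]
        push_cast
        ring_nf
      rw [this, hc_monomial, hc_monomial]
      split
      · next h =>
          subst h
          rw [smul_monomial, nsmul_eq_mul]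
      · simp

lemma sum_hc {p : MvPolynomial (Fin 3) ℝ} {N : ℕ} (h : p.totalDegree ≤ N) :
    ∑ d ∈ Finset.range (N + 1), homogeneousComponent d p = p := by
  conv_rhs => rw [← p.sum_homogeneousComponent]
  exact (Finset.sum_subset (Finset.range_subset_range.2 (by omega))
    (fun d _ hd => homogeneousComponent_eq_zero _ _
      (by rw [Finset.mem_range, not_lt] at hd; omega))).symm

lemma hasFDerivAt_eval (p : MvPolynomial (Fin 3) ℝ) (x : Fin 3 → ℝ) :
    HasFDerivAt (fun y => MvPolynomial.eval y p)
      (∑ i, MvPolynomial.eval x (pderiv i p) •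
        (ContinuousLinearMap.proj i : (Fin 3 → ℝ) →L[ℝ] ℝ)) x := by
  induction p using MvPolynomial.induction_on with
  | C a =>
      simp only [eval_C, pderiv_C, map_zero, zero_smul, Finset.sum_const_zero]
      exact hasFDerivAt_const a x
  | add p q hp hq =>
      simpa only [map_add, add_smul, Finset.sum_add_distrib, Pi.add_def] using hp.add hq
  | mul_X p n hp =>
      have hn : HasFDerivAt (fun y : Fin 3 → ℝ => y n)
          (ContinuousLinearMap.proj n : (Fin 3 → ℝ) →L[ℝ] ℝ) x :=
        (ContinuousLinearMap.proj n : (Fin 3 → ℝ) →L[ℝ] ℝ).hasFDerivAt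
      have h2 := hp.mul hn
      have h3 : HasFDerivAt (fun y => MvPolynomial.eval y (p * X n))
          (MvPolynomial.eval x p • (ContinuousLinearMap.proj n : (Fin 3 → ℝ) →L[ℝ] ℝ) +
            x n • ∑ i, MvPolynomial.eval x (pderiv i p) •
              (ContinuousLinearMap.proj i : (Fin 3 → ℝ) →L[ℝ] ℝ)) x := by
        simpa only [eval_mul, eval_X, Pi.mul_def] using h2
      convert h3 using 1
      ext v
      simp only [ContinuousLinearMap.sum_apply, ContinuousLinearMap.smul_apply,
        ContinuousLinearMap.proj_apply, ContinuousLinearMap.add_apply, smul_eq_mul,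
        pderiv_mul, pderiv_X, map_add, eval_mul, eval_X, Pi.single_apply]
      fin_cases n <;> simp [Fin.sum_univ_three] <;> ring

lemma fderiv_eval_single (p : MvPolynomial (Fin 3) ℝ) (x : Fin 3 → ℝ) (i : Fin 3) :
    fderiv ℝ (fun y => MvPolynomial.eval y p) x (Pi.single i 1) =
      MvPolynomial.eval x (pderiv i p) := by
  rw [(hasFDerivAt_eval p x).fderiv]
  simp only [ContinuousLinearMap.sum_apply, ContinuousLinearMap.smul_apply,
    ContinuousLinearMap.proj_apply, smul_eq_mul, Pi.single_apply]
  fin_cases i <;> simp [Fin.sum_univ_three]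

end NedAux

open MvPolynomial in
set_option maxHeartbeats 2000000 in
theorem nedelec_curlfree_is_grad (k : ℕ) (hk : 1 ≤ k)
    (A : (Fin 3 → ℝ) → (Fin 3 → ℝ)) (hA : IsNedelec k A)
    (hcurl : ∀ x, curl3 A x = 0) :
    ∃ ψ : MvPolynomial (Fin 3) ℝ, ψ.totalDegree ≤ k ∧
      ∀ x, A x = grad3 (fun y => MvPolynomial.eval y ψ) x := by
  classical
  obtain ⟨a, b, ha, hb, hAx⟩ := hA
  choose pa hpadeg hpaev using ha
  choose pb hpbdeg hpbev using hb
  set pc : Fin 3 → MvPolynomial (Fin 3) ℝ :=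
    ![X 1 * pb 2 - X 2 * pb 1, X 2 * pb 0 - X 0 * pb 2, X 0 * pb 1 - X 1 * pb 0] with hpc
  set P : Fin 3 → MvPolynomial (Fin 3) ℝ := fun i => pa i + pc i with hPdef
  -- A agrees with the polynomials P
  have hAP : ∀ x i, A x i = eval x (P i) := by
    intro x i
    have hx := congrFun (hAx x) i
    fin_cases i <;>
      simpa [hPdef, hpc, cross3, hpaev, hpbev] using hx
  -- partial derivatives of A components
  have hpd : ∀ i j x, pd3 (fun y => A y i) j x = eval x (pderiv j (P i)) := by
    intro i j x
    have hfun : (fun y => A y i) = fun y => eval y (P i) := funext fun y => hAP y i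
    rw [pd3, hfun, NedAux.fderiv_eval_single]
  -- symmetry of mixed partials from curl-free
  have key : ∀ (i j : Fin 3),
      (∀ x : Fin 3 → ℝ, pd3 (fun y => A y i) j x - pd3 (fun y => A y j) i x = 0) →
      pderiv j (P i) = pderiv i (P j) := by
    intro i j h
    apply MvPolynomial.funext
    intro x
    have hx := h x
    rw [hpd, hpd] at hx
    linarith
  have c0 : pderiv 1 (P 2) = pderiv 2 (P 1) := by
    refine key 2 1 fun x => ?_
    have hx := congrFun (hcurl x) 0
    simpa [curl3] using hx
  have c1 : pderiv 2 (P 0) = pderiv 0 (P 2) := by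
    refine key 0 2 fun x => ?_
    have hx := congrFun (hcurl x) 1
    simpa [curl3] using hx
  have c2 : pderiv 0 (P 1) = pderiv 1 (P 0) := by
    refine key 1 0 fun x => ?_
    have hx := congrFun (hcurl x) 2
    simpa [curl3] using hx
  have hsym : ∀ i j : Fin 3, pderiv j (P i) = pderiv i (P j) := by
    intro i j
    fin_cases i <;> fin_cases j <;>
      first
        | rfl
        | exact c0 | exact c0.symm | exact c1 | exact c1.symm | exact c2 | exact c2.symm
  -- the polynomial S = ∑ xᵢ Pᵢ
  set S : MvPolynomial (Fin 3) ℝ := ∑ i, X i * P i with hS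
  have hScross : S = ∑ i, X i * pa i := by
    rw [hS]
    simp only [hPdef, hpc, Fin.sum_univ_three, Matrix.cons_val_zero, Matrix.cons_val_one,
      Matrix.head_cons, Matrix.cons_val_two, Matrix.tail_cons]
    ring
  have hSdeg : S.totalDegree ≤ k := by
    rw [hScross]
    refine le_trans (totalDegree_finset_sum _ _) (Finset.sup_le fun i _ => ?_)
    refine le_trans (totalDegree_mul _ _) ?_
    rw [totalDegree_X]
    have := hpadeg i
    omega
  -- derivative of S
  have hdjS : ∀ j, pderiv j S = P j + ∑ i, X i * pderiv i (P j) := by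
    intro j
    rw [hS, map_sum]
    have hterm : ∀ i : Fin 3, pderiv j (X i * P i)
        = (if i = j then P i else 0) + X i * pderiv j (P i) := by
      intro i
      rw [pderiv_mul, pderiv_X]
      congr 1
      rcases eq_or_ne i j with h | h <;> simp [h, Pi.single_apply]
    rw [Finset.sum_congr rfl fun i _ => hterm i, Finset.sum_add_distrib,
      Finset.sum_ite_eq' Finset.univ j P]
    simp only [Finset.mem_univ, if_true]
    congr 1
    exact Finset.sum_congr rfl fun i _ => by rw [hsym i j]
  -- degrees of P
  have hmulb : ∀ (i l : Fin 3), (X (R := ℝ) i * pb l).totalDegree ≤ k := by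
    intro i l
    refine le_trans (totalDegree_mul _ _) ?_
    rw [totalDegree_X]
    have := hpbdeg l
    omega
  have hPdeg : ∀ j, (P j).totalDegree ≤ k := by
    intro j
    refine le_trans (totalDegree_add _ _) (max_le ((hpadeg j).trans (by omega)) ?_)
    fin_cases j <;>
      · simp only [hpc, Matrix.cons_val_zero, Matrix.cons_val_one, Matrix.head_cons,
          Matrix.cons_val_two, Matrix.tail_cons]
        exact le_trans (totalDegree_sub _ _) (max_le (hmulb _ _) (hmulb _ _))
  -- top homogeneous component of P vanishes
  have hHCk : ∀ j, homogeneousComponent k (P j) = 0 := by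
    intro j
    have h1 : homogeneousComponent k (pderiv j S) = 0 := by
      rw [← NedAux.pderiv_hc j k S,
        homogeneousComponent_eq_zero _ _ (lt_of_le_of_lt hSdeg (Nat.lt_succ_self k)), map_zero]
    rw [hdjS, map_add, NedAux.euler_hc] at h1
    have h2 : ((k : ℝ) + 1) • homogeneousComponent k (P j) = 0 := by
      rw [add_smul, one_smul, Nat.cast_smul_eq_nsmul, add_comm]
      exact h1
    have h3 : homogeneousComponent k (P j)
        = ((k : ℝ) + 1)⁻¹ • (((k : ℝ) + 1) • homogeneousComponent k (P j)) := by
      rw [smul_smul, inv_mul_cancel₀ (by positivity), one_smul]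
    rw [h3, h2, smul_zero]
  -- the potential
  set ψ : MvPolynomial (Fin 3) ℝ :=
    ∑ d ∈ Finset.range k, (((d : ℝ) + 1)⁻¹) • homogeneousComponent (d + 1) S with hψ
  have hgrad : ∀ j, pderiv j ψ = P j := by
    intro j
    rw [hψ, map_sum]
    have step : ∀ d : ℕ, pderiv j ((((d : ℝ) + 1)⁻¹) • homogeneousComponent (d + 1) S)
        = homogeneousComponent d (P j) := by
      intro d
      rw [Derivation.map_smul, NedAux.pderiv_hc, hdjS, map_add, NedAux.euler_hc]
      have hcomb : homogeneousComponent d (P j) + d • homogeneousComponent d (P j)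
          = ((d : ℝ) + 1) • homogeneousComponent d (P j) := by
        rw [add_smul, one_smul, Nat.cast_smul_eq_nsmul, add_comm]
      rw [hcomb, smul_smul, inv_mul_cancel₀ (by positivity), one_smul]
    rw [Finset.sum_congr rfl fun d _ => step d]
    have hsum := NedAux.sum_hc (hPdeg j)
    rw [Finset.sum_range_succ, hHCk j, add_zero] at hsum
    exact hsum
  refine ⟨ψ, ?_, ?_⟩
  · rw [hψ]
    refine le_trans (totalDegree_finset_sum _ _) (Finset.sup_le fun d hd => ?_)
    refine le_trans (totalDegree_smul_le _ _)
      (le_trans (homogeneousComponent_isHomogeneous (d + 1) S).totalDegree_le ?_)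
    rw [Finset.mem_range] at hd
    omega
  · intro x
    funext i
    show A x i = fderiv ℝ (fun y => MvPolynomial.eval y ψ) x (Pi.single i 1)
    rw [NedAux.fderiv_eval_single ψ x i, hgrad i, ← hAP x i]
end

section
/- The covariant (curl-conforming) transformation intertwines the curl with the Piola transformation: let J be an invertible real 3×3 matrix, b ∈ ℝ³, and let Ĝ : ℝ³ → ℝ³ be differentiable. Define G : ℝ³ → ℝ³ by G(y) := (Jᵀ)⁻¹ · Ĝ(J⁻¹(y − b)). Then G is differentiable and for every x ∈ ℝ³, (curl G)(J x + b) = (det J)⁻¹ · J · (curl Ĝ)(x). -/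
open Matrix

/-- `mulVec` as a continuous linear map. -/
noncomputable def mvCLM (M : Matrix (Fin 3) (Fin 3) ℝ) : (Fin 3 → ℝ) →L[ℝ] (Fin 3 → ℝ) :=
  LinearMap.toContinuousLinearMap M.mulVecLin

@[simp] lemma mvCLM_apply (M : Matrix (Fin 3) (Fin 3) ℝ) (v : Fin 3 → ℝ) :
    mvCLM M v = M *ᵥ v := rfl

lemma vec_eq_sum_single (v : Fin 3 → ℝ) :
    v = ∑ l : Fin 3, v l • (Pi.single l 1 : Fin 3 → ℝ) := by
  have h : ∀ l : Fin 3, v l • (Pi.single l 1 : Fin 3 → ℝ) = Pi.single l (v l) := by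
    intro l; ext j
    by_cases h : j = l
    · subst h; simp
    · simp [Pi.single_eq_of_ne h]
  simp_rw [h, Finset.univ_sum_single]

set_option maxHeartbeats 1000000 in
theorem covariant_transform_intertwines_curl
    (J : Matrix (Fin 3) (Fin 3) ℝ) (hJ : IsUnit J.det) (b : Fin 3 → ℝ)
    (Ghat : (Fin 3 → ℝ) → (Fin 3 → ℝ)) (hGhat : Differentiable ℝ Ghat) :
    Differentiable ℝ (fun y => (Jᵀ)⁻¹ *ᵥ Ghat (J⁻¹ *ᵥ (y - b))) ∧
    ∀ x : Fin 3 → ℝ,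
      curl3 (fun y => (Jᵀ)⁻¹ *ᵥ Ghat (J⁻¹ *ᵥ (y - b))) (J *ᵥ x + b)
        = (J.det)⁻¹ • (J *ᵥ curl3 Ghat x) := by
  set G := fun y => (Jᵀ)⁻¹ *ᵥ Ghat (J⁻¹ *ᵥ (y - b)) with hGdef
  -- differentiability of the inner affine map
  have hφdiff : ∀ y : Fin 3 → ℝ,
      HasFDerivAt (fun y => J⁻¹ *ᵥ (y - b)) (mvCLM J⁻¹) y := by
    intro y
    have h1 : HasFDerivAt (fun y : Fin 3 → ℝ => y - b)
        (ContinuousLinearMap.id ℝ (Fin 3 → ℝ)) y :=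
      (hasFDerivAt_id y).sub_const b
    have := ((mvCLM J⁻¹).hasFDerivAt (x := y - b)).comp y h1
    simpa using this
  have hGdiff : ∀ y : Fin 3 → ℝ,
      HasFDerivAt G
        ((mvCLM (Jᵀ)⁻¹).comp
          ((fderiv ℝ Ghat (J⁻¹ *ᵥ (y - b))).comp (mvCLM J⁻¹))) y := by
    intro y
    exact ((mvCLM (Jᵀ)⁻¹).hasFDerivAt).comp y
      (((hGhat _).hasFDerivAt).comp y (hφdiff y))
  constructor
  · exact fun y => (hGdiff y).differentiableAt
  intro x
  set p := J *ᵥ x + b with hp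
  have hpx : J⁻¹ *ᵥ (p - b) = x := by
    simp [hp, Matrix.mulVec_mulVec, Matrix.nonsing_inv_mul J hJ]
  set f := fderiv ℝ Ghat x with hf
  set D : Matrix (Fin 3) (Fin 3) ℝ := fun m l => f (Pi.single l 1) m with hD
  -- evaluate f on arbitrary vectors through D
  have hfD : ∀ (v : Fin 3 → ℝ) (m : Fin 3), f v m = ∑ l : Fin 3, v l * D m l := by
    intro v m
    conv_lhs => rw [vec_eq_sum_single v]
    rw [map_sum]
    simp [hD, Finset.sum_apply]
  -- partial derivatives of components of G at p
  have hpdG : ∀ (k i : Fin 3),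
      pd3 (fun y => G y k) i p
        = ((Jᵀ)⁻¹ *ᵥ f (J⁻¹ *ᵥ Pi.single i 1)) k := by
    intro k i
    have hcomp0 : HasFDerivAt
        (⇑(ContinuousLinearMap.proj (R := ℝ) (φ := fun _ : Fin 3 => ℝ) k) ∘ G)
        ((ContinuousLinearMap.proj (R := ℝ) (φ := fun _ : Fin 3 => ℝ) k).comp
          ((mvCLM (Jᵀ)⁻¹).comp
            ((fderiv ℝ Ghat (J⁻¹ *ᵥ (p - b))).comp (mvCLM J⁻¹)))) p :=
      HasFDerivAt.comp p (ContinuousLinearMap.hasFDerivAt _) (hGdiff p)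
    have hcomp : HasFDerivAt (fun y => G y k)
        ((ContinuousLinearMap.proj (R := ℝ) (φ := fun _ : Fin 3 => ℝ) k).comp
          ((mvCLM (Jᵀ)⁻¹).comp
            ((fderiv ℝ Ghat (J⁻¹ *ᵥ (p - b))).comp (mvCLM J⁻¹)))) p := hcomp0
    rw [pd3, hcomp.fderiv]
    simp [hpx, hf]
  -- partial derivatives of components of Ghat at x
  have hpdGhat : ∀ (m l : Fin 3),
      pd3 (fun y => Ghat y m) l x = D m l := by
    intro m l
    have hcomp0 : HasFDerivAt
        (⇑(ContinuousLinearMap.proj (R := ℝ) (φ := fun _ : Fin 3 => ℝ) m) ∘ Ghat)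
        ((ContinuousLinearMap.proj (R := ℝ) (φ := fun _ : Fin 3 => ℝ) m).comp
          (fderiv ℝ Ghat x)) x :=
      HasFDerivAt.comp x (ContinuousLinearMap.hasFDerivAt _) (hGhat x).hasFDerivAt
    have hcomp : HasFDerivAt (fun y => Ghat y m)
        ((ContinuousLinearMap.proj (R := ℝ) (φ := fun _ : Fin 3 => ℝ) m).comp
          (fderiv ℝ Ghat x)) x := hcomp0
    rw [pd3, hcomp.fderiv]
    simp [hD, hf]
  -- rewrite the right-hand side with the adjugate of J⁻¹
  have hadj : (J.det)⁻¹ • (J *ᵥ curl3 Ghat x) = (J⁻¹).adjugate *ᵥ curl3 Ghat x := by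
    have h1 : (J⁻¹).adjugate = (J.det)⁻¹ • J := by
      have h2 : (J⁻¹)⁻¹ = Ring.inverse (J⁻¹).det • (J⁻¹).adjugate := Matrix.inv_def _
      rw [Matrix.nonsing_inv_nonsing_inv J hJ, Matrix.det_nonsing_inv,
        Ring.inverse_eq_inv', inv_inv] at h2
      have hd : J.det ≠ 0 := hJ.ne_zero
      calc (J⁻¹).adjugate = (J.det)⁻¹ • (J.det • (J⁻¹).adjugate) := by
            rw [smul_smul, inv_mul_cancel₀ hd, one_smul]
        _ = (J.det)⁻¹ • J := by rw [← h2]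
    rw [h1, Matrix.smul_mulVec]
  rw [hadj]
  set A := J⁻¹ with hA
  have hK : (Jᵀ)⁻¹ = Aᵀ := (Matrix.transpose_nonsing_inv J).symm
  funext k
  fin_cases k <;>
  · simp only [Fin.zero_eta, Fin.mk_one, Fin.reduceFinMk, Fin.isValue, curl3, hpdG, hpdGhat,
      hK, Matrix.mulVec_single, hfD, Matrix.adjugate_fin_three, Matrix.mulVec, dotProduct,
      Fin.sum_univ_three, Matrix.transpose_apply, Matrix.cons_val', Matrix.cons_val_zero,
      Matrix.cons_val_one, Matrix.head_cons, Matrix.cons_val_two, Matrix.tail_cons,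
      Matrix.empty_val', Matrix.cons_val_fin_one, Matrix.of_apply, mul_one,
      Matrix.head_fin_const, MulOpposite.op_one, one_smul, Matrix.col_apply]
    ring
end
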